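/- arXiv:1205.3976 — 4 statements merged into one kernel-verified Lean document; each statement's English description precedes it below -/
import Mathlib

section
/- Let 𝔤 be a finite-dimensional Lie algebra over ℂ and let (h,e,f) be an sl₂-triple in 𝔤. Then ad(e) maps 𝔤₀ onto 𝔤₂: for every Y ∈ 𝔤 with ⁅h,Y⁆ = 2·Y there exists Z ∈ 𝔤 with ⁅h,Z⁆ = 0 and ⁅e,Z⁆ = Y. (This is the second surjectivity assertion of the paper's Lemma on the associated parabolic: ad_N : 𝔩 → 𝔤₂ is onto.) -/
open LieModule Module

/-- Let 𝔤 be a finite-dimensional Lie algebra over ℂ and let (h,e,f) be an sl₂-triple in 𝔤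
(e ≠ 0, ⁅h,e⁆ = 2e, ⁅h,f⁆ = −2f, ⁅e,f⁆ = h).  Then ad(e) maps 𝔤₀ onto 𝔤₂: for every Y with
⁅h,Y⁆ = 2•Y there exists Z with ⁅h,Z⁆ = 0 and ⁅e,Z⁆ = Y. -/
theorem ad_e_maps_zero_weight_onto_two_weight
    {L : Type*} [LieRing L] [LieAlgebra ℂ L] [FiniteDimensional ℂ L]
    (h e f : L) (he : e ≠ 0)
    (hHE : ⁅h, e⁆ = (2 : ℂ) • e) (hHF : ⁅h, f⁆ = (-2 : ℂ) • f)
    (hEF : ⁅e, f⁆ = h)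
    (Y : L) (hY : ⁅h, Y⁆ = (2 : ℂ) • Y) :
    ∃ Z : L, ⁅h, Z⁆ = 0 ∧ ⁅e, Z⁆ = Y := by
  classical
  have hH : h ≠ 0 := by
    intro h0
    apply he
    have : (2 : ℂ) • e = 0 := by rw [← hHE, h0, zero_lie]
    simpa using this
  have t : IsSl2Triple h e f := by
    refine ⟨hH, hEF, ?_, ?_⟩
    · rw [hHE, two_smul, two_smul]
    · rw [hHF]; rw [two_smul]; rw [neg_smul]; rw [two_smul]
  set E := LieModule.toEnd ℂ L L e with hEdef
  set F := LieModule.toEnd ℂ L L f with hFdef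
  -- bracket with h of ⁅f, v⁆ for v of weight 2 is 0
  have hw0 : ∀ v : L, ⁅h, v⁆ = (2 : ℂ) • v → ⁅h, ⁅f, v⁆⁆ = 0 := by
    intro v hv
    rw [leibniz_lie, hHF, hv, lie_smul, smul_lie]
    simp
  -- key injectivity statement
  have key : ∀ v : L, ⁅h, v⁆ = (2 : ℂ) • v → ⁅e, ⁅f, v⁆⁆ = 0 → v = 0 := by
    intro v hv hefv
    by_contra hv0
    set w := ⁅f, v⁆ with hwdef
    have hhw : ⁅h, w⁆ = 0 := hw0 v hv
    have hfw : ⁅f, w⁆ = 0 := by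
      by_cases hwz : w = 0
      · simp [hwz]
      · have P : t.HasPrimitiveVectorWith w (0 : ℂ) := ⟨hwz, by simp [hhw], hefv⟩
        have := P.pow_toEnd_f_eq_zero_of_eq_nat (n := 0) (by simp)
        simpa using this
    -- weights going up
    have hv_h : ∀ j : ℕ, ⁅h, (E ^ j) v⁆ = ((2 + 2 * j : ℂ)) • (E ^ j) v := by
      intro j
      induction j with
      | zero => simpa using hv
      | succ j ih =>
        rw [pow_succ', Module.End.mul_apply, hEdef, LieModule.toEnd_apply_apply,
          leibniz_lie, hHE, ih, lie_smul, smul_lie, ← LieModule.toEnd_apply_apply ℂ L L e,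
          ← hEdef, ← add_smul]
        congr 1
        push_cast
        ring
    -- the chain must terminate
    have hex : ∃ j : ℕ, (E ^ j) v = 0 := by
      by_contra hcon
      push_neg at hcon
      have hli := Module.End.eigenvectors_linearIndependent'
        (LieModule.toEnd ℂ L L h) (fun j : ℕ => (2 + 2 * j : ℂ))
        (fun i j hij => by
          field_simp at hij
          exact_mod_cast add_left_cancel hij)
        (fun j => (E ^ j) v)
        (fun j => ⟨Module.End.mem_eigenspace_iff.mpr
          (by rw [LieModule.toEnd_apply_apply]; exact hv_h j), hcon j⟩)
      have : Finite ℕ := hli.finite_of_isNoetherian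
      exact not_finite ℕ
    obtain ⟨k, hk1, hk2⟩ :=
      Nat.exists_not_and_succ_of_not_zero_of_exists (p := fun j => (E ^ j) v = 0)
        (by simpa using hv0) hex
    -- action of f going down
    have hFE : ⁅f, e⁆ = -h := by rw [← lie_skew, hEF]
    have hfv : ∀ j : ℕ, ⁅f, (E ^ (j + 1)) v⁆ = (-((j + 1) * (j + 2)) : ℂ) • (E ^ j) v := by
      intro j
      induction j with
      | zero =>
        rw [pow_one, hEdef, LieModule.toEnd_apply_apply, leibniz_lie, ← hwdef, hefv,
          add_zero, hFE, neg_lie, hv]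
        norm_num
      | succ j ih =>
        rw [pow_succ' E (j + 1), Module.End.mul_apply, hEdef, LieModule.toEnd_apply_apply,
          leibniz_lie, hFE, neg_lie, hv_h (j + 1), ih, lie_smul,
          ← LieModule.toEnd_apply_apply ℂ L L e, ← hEdef, ← Module.End.mul_apply, ← pow_succ',
          ← neg_smul, ← add_smul]
        congr 1
        push_cast
        ring
    -- the top of the chain is a primitive vector
    have P' : t.HasPrimitiveVectorWith ((E ^ k) v) (((2 + 2 * k : ℕ) : ℂ)) := by
      refine ⟨hk1, ?_, ?_⟩
      · rw [hv_h k]; congr 1; push_cast; ring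
      · rw [← LieModule.toEnd_apply_apply ℂ L L e, ← hEdef, ← Module.End.mul_apply, ← pow_succ']
        exact hk2
    -- descend with f
    have desc : ∀ j : ℕ, j ≤ k → ∃ C : ℂ, C ≠ 0 ∧ (F ^ j) ((E ^ k) v) = C • (E ^ (k - j)) v := by
      intro j
      induction j with
      | zero => exact fun _ => ⟨1, one_ne_zero, by simp⟩
      | succ j ih =>
        intro hj
        obtain ⟨C, hC, hC2⟩ := ih (Nat.le_of_succ_le hj)
        have hkj : k - j = (k - j - 1) + 1 := by omega
        refine ⟨C * (-(((k - j - 1 : ℕ) + 1) * ((k - j - 1 : ℕ) + 2))), ?_, ?_⟩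
        · apply mul_ne_zero hC
          rw [neg_ne_zero]
          have hcast : ((((k - j - 1 : ℕ) : ℂ) + 1) * (((k - j - 1 : ℕ) : ℂ) + 2))
              = (((k - j - 1 + 1) * (k - j - 1 + 2) : ℕ) : ℂ) := by push_cast; ring
          rw [hcast, Nat.cast_ne_zero]
          positivity
        · rw [pow_succ', Module.End.mul_apply, hC2, map_smul, hFdef,
            LieModule.toEnd_apply_apply, hkj, hfv (k - j - 1), smul_smul,
            show k - j - 1 = k - (j + 1) from by omega, Nat.add_sub_cancel]
    obtain ⟨C, hC, hCk⟩ := desc k le_rfl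
    have h1 : (F ^ (k + 1)) ((E ^ k) v) = C • w := by
      rw [pow_succ', Module.End.mul_apply, hCk, Nat.sub_self, pow_zero, Module.End.one_apply,
        map_smul, hFdef, LieModule.toEnd_apply_apply, ← hwdef]
    have h2 : (F ^ (k + 2)) ((E ^ k) v) = 0 := by
      rw [show k + 2 = (k + 1) + 1 from rfl, pow_succ', Module.End.mul_apply, h1, map_smul,
        hFdef, LieModule.toEnd_apply_apply, hfw, smul_zero]
    have hne := P'.pow_toEnd_f_ne_zero_of_eq_nat (n := 2 + 2 * k) rfl (i := k + 2) (by omega)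
    exact hne h2
  -- the weight-2 eigenspace and the endomorphism e∘f of it
  set V := Module.End.eigenspace (LieModule.toEnd ℂ L L h) 2 with hVdef
  have memV : ∀ v : L, v ∈ V ↔ ⁅h, v⁆ = (2 : ℂ) • v := by
    intro v
    rw [hVdef, Module.End.mem_eigenspace_iff, LieModule.toEnd_apply_apply]
  have hmem : ∀ v : L, v ∈ V → ⁅e, ⁅f, v⁆⁆ ∈ V := by
    intro v hvV
    rw [memV] at hvV ⊢
    rw [leibniz_lie h e, hHE, hw0 v hvV, lie_zero, add_zero, smul_lie]
  let Φ : V →ₗ[ℂ] V :=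
    { toFun := fun v => ⟨⁅e, ⁅f, (v : L)⁆⁆, hmem v v.2⟩
      map_add' := by intro a b; ext; simp
      map_smul' := by intro c a; ext; simp }
  have hinj : Function.Injective Φ := by
    rw [injective_iff_map_eq_zero]
    intro a ha
    have h1 : ⁅e, ⁅f, (a : L)⁆⁆ = 0 := congrArg Subtype.val ha
    have h2 : (a : L) = 0 := key a ((memV a).mp a.2) h1
    exact Subtype.ext h2
  obtain ⟨u, hu⟩ := (LinearMap.injective_iff_surjective).mp hinj ⟨Y, (memV Y).mpr hY⟩
  refine ⟨⁅f, (u : L)⁆, hw0 u ((memV u).mp u.2), ?_⟩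
  exact congrArg Subtype.val hu
end

section
/- Let 𝔤 be a finite-dimensional Lie algebra over ℂ and let (h,e,f) be an sl₂-triple in 𝔤. Then ad(e) maps ⊕_{i≥1} 𝔤_i onto ⊕_{i≥3} 𝔤_i: every element of the submodule of 𝔤 generated by the eigenspaces of ad(h) for integer eigenvalues i ≥ 3 is of the form ⁅e,Z⁆ for some Z in the submodule generated by the eigenspaces of ad(h) for integer eigenvalues i ≥ 1. (This is the first surjectivity assertion of the paper's Lemma on the associated parabolic: ad_N : 𝔲_P → ⊕_{i≥3} 𝔤_i is onto.) -/
open LieAlgebra Module Set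

section Aux

variable {L : Type*} [LieRing L] [LieAlgebra ℂ L]

/-- Bracketing with `e` raises the `ad h`-eigenvalue by 2. -/
private lemma aux_lie_raise (h e : L) (hHE : ⁅h, e⁆ = (2 : ℂ) • e)
    {v : L} {c : ℂ} (hv : ⁅h, v⁆ = c • v) :
    ⁅h, ⁅e, v⁆⁆ = (c + 2) • ⁅e, v⁆ := by
  rw [leibniz_lie, hHE, hv, smul_lie, lie_smul, add_smul]
  abel

/-- Bracketing with `f` lowers the `ad h`-eigenvalue by 2. -/
private lemma aux_lie_lower (h f : L) (hHF : ⁅h, f⁆ = (-2 : ℂ) • f)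
    {v : L} {c : ℂ} (hv : ⁅h, v⁆ = c • v) :
    ⁅h, ⁅f, v⁆⁆ = (c - 2) • ⁅f, v⁆ := by
  rw [leibniz_lie, hHF, hv, smul_lie, lie_smul, sub_smul, sub_eq_add_neg, ← neg_smul]
  abel

private lemma aux_h_chain (h e : L) (hHE : ⁅h, e⁆ = (2 : ℂ) • e)
    {v : L} {c : ℂ} (hv : ⁅h, v⁆ = c • v) (k : ℕ) :
    ⁅h, ((ad ℂ L e) ^ k) v⁆ = (c + 2 * k) • ((ad ℂ L e) ^ k) v := by
  induction k with
  | zero => simpa using hv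
  | succ k ih =>
    rw [pow_succ', Module.End.mul_apply, ad_apply, aux_lie_raise h e hHE ih]
    push_cast
    ring_nf

private lemma aux_f_chain (h e f : L)
    (hHE : ⁅h, e⁆ = (2 : ℂ) • e) (hEF : ⁅e, f⁆ = h)
    {v : L} {c : ℂ} (hv : ⁅h, v⁆ = c • v) (h0 : ⁅e, ⁅f, v⁆⁆ = 0) (k : ℕ) :
    ⁅f, ((ad ℂ L e) ^ (k + 1)) v⁆ =
      (-((k : ℂ) + 1) * (c + k)) • ((ad ℂ L e) ^ k) v := by
  induction k with
  | zero =>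
    have hfe : ⁅f, e⁆ = -h := by rw [← lie_skew, hEF]
    simp only [zero_add, pow_one, pow_zero, Module.End.one_apply, ad_apply, Nat.cast_zero]
    rw [leibniz_lie, hfe, neg_lie, hv, h0, add_zero]
    push_cast
    rw [← neg_smul]
    congr 1
    ring
  | succ k ih =>
    have hfe : ⁅f, e⁆ = -h := by rw [← lie_skew, hEF]
    have hk : ⁅h, ((ad ℂ L e) ^ (k + 1)) v⁆
        = (c + 2 * (k + 1)) • ((ad ℂ L e) ^ (k + 1)) v := by
      simpa using aux_h_chain h e hHE hv (k + 1)
    have hstep : ⁅e, ((ad ℂ L e) ^ k) v⁆ = ((ad ℂ L e) ^ (k + 1)) v := by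
      rw [pow_succ', Module.End.mul_apply, ad_apply]
    rw [show (k : ℕ) + 1 + 1 = (k + 1) + 1 from rfl, pow_succ', Module.End.mul_apply, ad_apply,
      leibniz_lie, hfe, neg_lie, hk, ih, lie_smul, hstep, ← neg_smul, ← add_smul]
    congr 1
    push_cast
    ring

private lemma aux_exists_pow_zero [FiniteDimensional ℂ L] (h e : L)
    (hHE : ⁅h, e⁆ = (2 : ℂ) • e)
    {v : L} {c : ℂ} (hv : ⁅h, v⁆ = c • v) :
    ∃ k : ℕ, ((ad ℂ L e) ^ k) v = 0 := by
  by_contra! contra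
  have hinj : Function.Injective (fun k : ℕ => c + 2 * (k : ℂ)) := by
    intro a b hab
    field_simp at hab
    have h2 : ((2 * a : ℕ) : ℂ) = ((2 * b : ℕ) : ℂ) := by push_cast; exact add_left_cancel hab
    have h3 := Nat.cast_injective h2
    omega
  have hli := (ad ℂ L h).eigenvectors_linearIndependent'
    (fun k : ℕ => c + 2 * (k : ℂ)) hinj (fun k => ((ad ℂ L e) ^ k) v)
    (fun k => ⟨Module.End.mem_eigenspace_iff.mpr (by simpa using aux_h_chain h e hHE hv k),
      contra k⟩)
  exact Module.Finite.not_linearIndependent_of_infinite (R := ℂ)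
    (fun k : ℕ => ((ad ℂ L e) ^ k) v) hli

/-- Key injectivity: if `v` is an eigenvector of `ad h` with eigenvalue `i ≥ 1` and
`⁅e, ⁅f, v⁆⁆ = 0` then `v = 0`. -/
private lemma aux_key [FiniteDimensional ℂ L] (h e f : L)
    (hHE : ⁅h, e⁆ = (2 : ℂ) • e) (hEF : ⁅e, f⁆ = h)
    (i : ℤ) (hi : 1 ≤ i) {v : L} (hv : ⁅h, v⁆ = (i : ℂ) • v)
    (h0 : ⁅e, ⁅f, v⁆⁆ = 0) : v = 0 := by
  by_contra hv0
  obtain ⟨k, hk1, hk2⟩ := Nat.exists_not_and_succ_of_not_zero_of_exists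
    (p := fun k => ((ad ℂ L e) ^ k) v = 0) (by simpa using hv0)
    (aux_exists_pow_zero h e hHE hv)
  have := aux_f_chain h e f hHE hEF hv h0 k
  rw [hk2, lie_zero, eq_comm, smul_eq_zero] at this
  rcases this with hc | hc
  · have h1 : ((k : ℂ) + 1) ≠ 0 := Nat.cast_add_one_ne_zero k
    have h2 : (i : ℂ) + k = 0 := by
      rcases mul_eq_zero.mp hc with h' | h'
      · exact absurd (neg_eq_zero.mp h') h1
      · exact h'
    have h3 : ((i + (k : ℤ) : ℤ) : ℂ) = 0 := by push_cast; exact h2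
    have h4 : i + (k : ℤ) = 0 := by exact_mod_cast h3
    omega
  · exact hk1 hc

end Aux

/-- Let 𝔤 be a finite-dimensional Lie algebra over ℂ and let (h,e,f) be an sl₂-triple in 𝔤.
Then ad(e) maps ⊕_{i≥1} 𝔤_i onto ⊕_{i≥3} 𝔤_i, where 𝔤_i is the eigenspace of ad(h) with
eigenvalue i ∈ ℤ. -/
theorem ad_e_maps_pos_part_onto_high_part
    {L : Type*} [LieRing L] [LieAlgebra ℂ L] [FiniteDimensional ℂ L]
    (h e f : L) (he : e ≠ 0)
    (hHE : ⁅h, e⁆ = (2 : ℂ) • e) (hHF : ⁅h, f⁆ = (-2 : ℂ) • f)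
    (hEF : ⁅e, f⁆ = h)
    (Y : L)
    (hY : Y ∈ ⨆ i ∈ Set.Ici (3 : ℤ),
      Module.End.eigenspace (LieAlgebra.ad ℂ L h) (i : ℂ)) :
    ∃ Z ∈ ⨆ i ∈ Set.Ici (1 : ℤ),
      Module.End.eigenspace (LieAlgebra.ad ℂ L h) (i : ℂ), ⁅e, Z⁆ = Y := by
  set eig : ℤ → Submodule ℂ L :=
    fun i => Module.End.eigenspace (LieAlgebra.ad ℂ L h) (i : ℂ) with heig
  -- the composite (ad e) ∘ (ad f) preserves each eigenspace and is bijective on eig i for i ≥ 1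
  have hmem : ∀ (i : ℤ) (v : L), v ∈ eig i ↔ ⁅h, v⁆ = (i : ℂ) • v := by
    intro i v
    rw [heig, Module.End.mem_eigenspace_iff, ad_apply]
  have hsurj : ∀ i : ℤ, 1 ≤ i → ∀ v ∈ eig i, ∃ u ∈ eig i, ⁅e, ⁅f, u⁆⁆ = v := by
    intro i hi v hv
    set T : Module.End ℂ L := (LieAlgebra.ad ℂ L e) ∘ₗ (LieAlgebra.ad ℂ L f) with hT
    have hTmem : ∀ u ∈ eig i, T u ∈ eig i := by
      intro u hu
      rw [hmem] at hu ⊢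
      have h1 : ⁅h, ⁅f, u⁆⁆ = ((i : ℂ) - 2) • ⁅f, u⁆ := aux_lie_lower h f hHF hu
      have h2 : ⁅h, ⁅e, ⁅f, u⁆⁆⁆ = ((i : ℂ) - 2 + 2) • ⁅e, ⁅f, u⁆⁆ :=
        aux_lie_raise h e hHE h1
      simpa [hT] using h2
    set g := T.restrict hTmem with hg
    have hginj : Function.Injective g := by
      rw [← LinearMap.ker_eq_bot, LinearMap.ker_eq_bot']
      intro ⟨u, hu⟩ hgu
      have hTu : T u = 0 := by
        have := congrArg (Subtype.val) hgu
        simpa [hg, LinearMap.restrict_apply] using this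
      have : u = 0 :=
        aux_key h e f hHE hEF i hi ((hmem i u).mp hu) (by simpa [hT] using hTu)
      exact Subtype.ext this
    have hgsurj : Function.Surjective g := (LinearMap.injective_iff_surjective).mp hginj
    obtain ⟨⟨u, hu⟩, hgu⟩ := hgsurj ⟨v, hv⟩
    refine ⟨u, hu, ?_⟩
    have := congrArg (Subtype.val) hgu
    simpa [hg, LinearMap.restrict_apply, hT] using this
  -- now the main argument
  have hle : (⨆ i ∈ Set.Ici (3 : ℤ), eig i) ≤
      Submodule.map (LieAlgebra.ad ℂ L e) (⨆ i ∈ Set.Ici (1 : ℤ), eig i) := by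
    refine iSup₂_le fun i hi => ?_
    intro v hv
    obtain ⟨u, hu, huv⟩ := hsurj i (by exact le_trans (by norm_num) hi) v hv
    refine Submodule.mem_map.mpr ⟨⁅f, u⁆, ?_, by simpa using huv⟩
    have hfu : ⁅f, u⁆ ∈ eig (i - 2) := by
      rw [hmem]
      have := aux_lie_lower h f hHF ((hmem i u).mp hu)
      simpa [push_cast] using (by push_cast; exact this : ⁅h, ⁅f, u⁆⁆ = ((i - 2 : ℤ) : ℂ) • ⁅f, u⁆)
    exact Submodule.mem_iSup_of_mem (i - 2) (Submodule.mem_iSup_of_mem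
      (by simp only [Set.mem_Ici] at hi ⊢; omega) hfu)
  obtain ⟨Z, hZ, hZY⟩ := Submodule.mem_map.mp (hle hY)
  exact ⟨Z, hZ, by simpa using hZY⟩
end

section
/- Let Δ = {α ∈ Φ⁺ : α is not the sum of two elements of Φ⁺} (the simple roots). Let v₁ be a linear automorphism of V with v₁(Φ) = Φ. Let Φ_L ⊆ Φ satisfy Φ_L = −Φ_L and f(v₁⁻¹(β)) > 0 for every β ∈ Φ_L with f(β) > 0, and let Φ_N ⊆ Φ⁺ satisfy v₁⁻¹(α) ∈ Δ for every α ∈ Φ_N. Define Φ⁺(V) = {γ ∈ Φ⁺ : γ = α + β for some α ∈ Φ_N and β ∈ Φ_L with f(β) > 0} and Φ⁻(V) = {γ ∈ Φ⁺ : γ = α + β for some α ∈ Φ_N and β ∈ Φ_L with f(β) < 0}. Then the three sets Φ⁻(V), Φ_N and Φ⁺(V) are pairwise disjoint. (This is the disjointness assertion underlying the paper's Lemma 'empty': 𝔤₂(λ) = V⁻ ⊕ ⊕_{α∈Φ_N} 𝔤_α ⊕ V.) -/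
/-- Disjointness assertion underlying the paper's Lemma 'empty':
with Δ the simple roots, v₁ ∈ W^L, Φ_L = −Φ_L the Levi roots, Φ_N ⊆ Φ⁺ with
v₁⁻¹(Φ_N) ⊆ Δ, the three sets Φ⁻(V), Φ_N and Φ⁺(V) are pairwise disjoint. -/
theorem weight_two_pieces_pairwise_disjoint
    {V : Type*} [AddCommGroup V] [Module ℝ V]
    (f : V →ₗ[ℝ] ℝ) (Φ : Set V) (hfin : Φ.Finite)
    (hreg : ∀ γ ∈ Φ, f γ ≠ 0)
    (v₁ : V ≃ₗ[ℝ] V) (hv₁Φ : ⇑v₁ '' Φ = Φ)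
    (ΦL : Set V) (hΦLΦ : ΦL ⊆ Φ) (hΦLsym : ∀ γ, γ ∈ ΦL ↔ -γ ∈ ΦL)
    (hv₁L : ∀ β ∈ ΦL, 0 < f β → 0 < f (v₁.symm β))
    (ΦN : Set V) (hΦN : ΦN ⊆ {γ ∈ Φ | 0 < f γ})
    (hΦNΔ : ∀ α ∈ ΦN, v₁.symm α ∈
      {α ∈ Φ | 0 < f α ∧
        ¬∃ β ∈ Φ, 0 < f β ∧ ∃ δ ∈ Φ, 0 < f δ ∧ α = β + δ}) :
    ({γ ∈ Φ | 0 < f γ ∧ ∃ α ∈ ΦN, ∃ β ∈ ΦL, f β < 0 ∧ γ = α + β} ∩ ΦN = ∅) ∧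
    (ΦN ∩ {γ ∈ Φ | 0 < f γ ∧ ∃ α ∈ ΦN, ∃ β ∈ ΦL, 0 < f β ∧ γ = α + β} = ∅) ∧
    ({γ ∈ Φ | 0 < f γ ∧ ∃ α ∈ ΦN, ∃ β ∈ ΦL, f β < 0 ∧ γ = α + β} ∩
      {γ ∈ Φ | 0 < f γ ∧ ∃ α ∈ ΦN, ∃ β ∈ ΦL, 0 < f β ∧ γ = α + β} = ∅) := by
  -- v₁.symm maps Φ into Φ
  have hsymmΦ : ∀ x ∈ Φ, v₁.symm x ∈ Φ := by
    intro x hx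
    rw [← hv₁Φ] at hx
    obtain ⟨y, hy, rfl⟩ := hx
    simpa using hy
  -- key fact: v₁.symm (-β) is a positive root for β ∈ ΦL with f β < 0
  have hneg : ∀ β ∈ ΦL, f β < 0 →
      v₁.symm (-β) ∈ Φ ∧ 0 < f (v₁.symm (-β)) := by
    intro β hβ hβneg
    have hβ' : -β ∈ ΦL := (hΦLsym β).mp hβ
    refine ⟨hsymmΦ _ (hΦLΦ hβ'), hv₁L _ hβ' ?_⟩
    simpa using hβneg
  refine ⟨?_, ?_, ?_⟩
  · rw [Set.eq_empty_iff_forall_notMem]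
    rintro γ ⟨⟨hγΦ, hγpos, α, hαN, β, hβL, hβneg, rfl⟩, hγN⟩
    obtain ⟨hαΦ', hαpos', hαsimp⟩ := hΦNΔ α hαN
    obtain ⟨hγΦ', hγpos', -⟩ := hΦNΔ _ hγN
    obtain ⟨h1, h2⟩ := hneg β hβL hβneg
    exact hαsimp ⟨_, hγΦ', hγpos', _, h1, h2, by
      rw [← map_add]; congr 1; abel⟩
  · rw [Set.eq_empty_iff_forall_notMem]
    rintro γ ⟨hγN, hγΦ, hγpos, α, hαN, β, hβL, hβpos, rfl⟩
    obtain ⟨hγΦ', hγpos', hγsimp⟩ := hΦNΔ _ hγN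
    obtain ⟨hαΦ', hαpos', -⟩ := hΦNΔ α hαN
    exact hγsimp ⟨_, hαΦ', hαpos', _, hsymmΦ _ (hΦLΦ hβL),
      hv₁L β hβL hβpos, by rw [← map_add]⟩
  · rw [Set.eq_empty_iff_forall_notMem]
    rintro γ ⟨⟨hγΦ, hγpos, α, hαN, β, hβL, hβneg, rfl⟩,
      -, -, α', hαN', β', hβL', hβpos', heq⟩
    obtain ⟨hαΦ', hαpos', hαsimp⟩ := hΦNΔ α hαN
    obtain ⟨hαΦ2, hαpos2, -⟩ := hΦNΔ α' hαN'
    have hγΦ' : v₁.symm (α + β) ∈ Φ := hsymmΦ _ hγΦ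
    have hγpos' : 0 < f (v₁.symm (α + β)) := by
      rw [heq, map_add, map_add]
      exact add_pos hαpos2 (hv₁L β' hβL' hβpos')
    obtain ⟨h1, h2⟩ := hneg β hβL hβneg
    exact hαsimp ⟨_, hγΦ', hγpos', _, h1, h2, by
      rw [← map_add]; congr 1; abel⟩
end

section
/- Assume moreover that Φ = −Φ. Let Φ_M ⊆ Φ satisfy Φ_M = −Φ_M, and let y and v be linear automorphisms of V with y(Φ) = Φ and v(Φ) = Φ such that: y(Φ_M) = Φ_M; Φ_y ⊆ Φ_M; and v⁻¹(β) ∈ Φ⁺ for every β ∈ Φ_M ∩ Φ⁺. Set w = y ∘ v. Let Φ_H ⊆ Φ satisfy Φ⁺ ⊆ Φ_H, and set Φ_H⁻ = Φ_H ∩ Φ⁻. Then {γ ∈ Φ⁺ \ Φ_M : w⁻¹(γ) ∉ Φ_H} = y(Φ_v) \ w(Φ_H⁻), and consequently |y(Φ_v)| − |{γ ∈ Φ⁺ \ Φ_M : w⁻¹(γ) ∉ Φ_H}| = |y(Φ_v) ∩ w(Φ_H⁻)|. (This is the combinatorial identity used in the paper's Corollary computing dimensions in the arbitrary case: |y(Φ_v)|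 − dim 𝔲_Q/(𝔲_Q ∩ ẇ·H) = |y(Φ_v) ∩ w(Φ_H⁻)|, where Φ(𝔲_Q) = Φ⁺ \ Φ_M.) -/
/-- Combinatorial identity used in the paper's Corollary computing cell dimensions in the
arbitrary case: with w = y ∘ v for y ∈ W_M and v ∈ W^M, and Φ(𝔲_Q) = Φ⁺ \ Φ_M,
{γ ∈ Φ⁺ \ Φ_M : w⁻¹(γ) ∉ Φ_H} = y(Φ_v) \ w(Φ_H⁻), and hence
|y(Φ_v)| − |{γ ∈ Φ⁺ \ Φ_M : w⁻¹(γ) ∉ Φ_H}| = |y(Φ_v) ∩ w(Φ_H⁻)|. -/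
theorem arbitrary_cell_dimension_combinatorics
    {V : Type*} [AddCommGroup V] [Module ℝ V]
    (f : V →ₗ[ℝ] ℝ) (Φ : Set V) (hfin : Φ.Finite)
    (hreg : ∀ γ ∈ Φ, f γ ≠ 0)
    (hsym : ∀ γ, γ ∈ Φ ↔ -γ ∈ Φ)
    (ΦM : Set V) (hΦMΦ : ΦM ⊆ Φ) (hΦMsym : ∀ γ, γ ∈ ΦM ↔ -γ ∈ ΦM)
    (y v : V ≃ₗ[ℝ] V)
    (hyΦ : ⇑y '' Φ = Φ) (hvΦ : ⇑v '' Φ = Φ)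
    (hyM : ⇑y '' ΦM = ΦM)
    (hΦy : {γ | γ ∈ Φ ∧ 0 < f γ ∧ y.symm γ ∈ Φ ∧ f (y.symm γ) < 0} ⊆ ΦM)
    (hv : ∀ β ∈ ΦM, 0 < f β → v.symm β ∈ Φ ∧ 0 < f (v.symm β))
    (w : V ≃ₗ[ℝ] V) (hwdef : w = v.trans y)
    (ΦH : Set V) (hΦHΦ : ΦH ⊆ Φ)
    (hplus : {γ ∈ Φ | 0 < f γ} ⊆ ΦH)
    (ΦHminus : Set V)
    (hΦHminusdef : ΦHminus = ΦH ∩ {γ ∈ Φ | f γ < 0})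
    (Φv : Set V)
    (hΦvdef : Φv = {γ ∈ Φ | 0 < f γ ∧ v.symm γ ∈ Φ ∧ f (v.symm γ) < 0}) :
    ({γ ∈ Φ | 0 < f γ ∧ γ ∉ ΦM ∧ w.symm γ ∉ ΦH} = (⇑y '' Φv) \ (⇑w '' ΦHminus)) ∧
    ((⇑y '' Φv).ncard - {γ ∈ Φ | 0 < f γ ∧ γ ∉ ΦM ∧ w.symm γ ∉ ΦH}.ncard
        = (⇑y '' Φv ∩ ⇑w '' ΦHminus).ncard) := by
  -- basic stability facts
  have hyΦ' : ∀ γ ∈ Φ, y γ ∈ Φ := fun γ hγ => hyΦ ▸ ⟨γ, hγ, rfl⟩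
  have hyΦ'' : ∀ γ ∈ Φ, y.symm γ ∈ Φ := by
    intro γ hγ
    rw [← hyΦ] at hγ
    obtain ⟨β, hβ, rfl⟩ := hγ
    simpa using hβ
  have hvΦ'' : ∀ γ ∈ Φ, v.symm γ ∈ Φ := by
    intro γ hγ
    rw [← hvΦ] at hγ
    obtain ⟨β, hβ, rfl⟩ := hγ
    simpa using hβ
  have hyM'' : ∀ γ ∈ ΦM, y.symm γ ∈ ΦM := by
    intro γ hγ
    rw [← hyM] at hγ
    obtain ⟨β, hβ, rfl⟩ := hγ
    simpa using hβ
  have hwsymm : ∀ γ, w.symm γ = v.symm (y.symm γ) := by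
    intro γ; rw [hwdef]; rfl
  -- key claim: if β ∈ Φv then y β ∉ ΦM and y β ∈ Φ⁺
  have key : ∀ β ∈ Φv, y β ∈ Φ ∧ 0 < f (y β) ∧ y β ∉ ΦM := by
    intro β hβ
    rw [hΦvdef] at hβ
    obtain ⟨hβΦ, hβpos, hvβΦ, hvβneg⟩ := hβ
    have hyβΦ : y β ∈ Φ := hyΦ' β hβΦ
    have hnM : y β ∉ ΦM := by
      intro hM
      have hβM : β ∈ ΦM := by simpa using hyM'' _ hM
      have := (hv β hβM hβpos).2
      linarith
    refine ⟨hyβΦ, ?_, hnM⟩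
    by_contra hle
    push_neg at hle
    have hne : f (y β) ≠ 0 := hreg _ hyβΦ
    have hneg : f (y β) < 0 := lt_of_le_of_ne hle hne
    have hmem : -(y β) ∈ ΦM := by
      apply hΦy
      refine ⟨(hsym _).mp hyβΦ, by simp [hneg], ?_, ?_⟩
      · simpa using (hsym _).mp hβΦ
      · simpa using hβpos
    have : y β ∈ ΦM := (hΦMsym _).mpr hmem
    exact hnM this
  -- the set identity
  have hset : {γ ∈ Φ | 0 < f γ ∧ γ ∉ ΦM ∧ w.symm γ ∉ ΦH}
      = (⇑y '' Φv) \ (⇑w '' ΦHminus) := by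
    ext γ
    constructor
    · rintro ⟨hγΦ, hγpos, hγM, hγH⟩
      have hβΦ : y.symm γ ∈ Φ := hyΦ'' γ hγΦ
      have hβpos : 0 < f (y.symm γ) := by
        by_contra hle
        push_neg at hle
        have hne : f (y.symm γ) ≠ 0 := hreg _ hβΦ
        have hneg : f (y.symm γ) < 0 := lt_of_le_of_ne hle hne
        exact hγM (hΦy ⟨hγΦ, hγpos, hβΦ, hneg⟩)
      have hwγΦ : v.symm (y.symm γ) ∈ Φ := hvΦ'' _ hβΦ
      have hwneg : f (v.symm (y.symm γ)) < 0 := by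
        by_contra hle
        push_neg at hle
        have hne : f (v.symm (y.symm γ)) ≠ 0 := hreg _ hwγΦ
        have hpos : 0 < f (v.symm (y.symm γ)) := lt_of_le_of_ne hle (Ne.symm hne)
        exact hγH (by rw [hwsymm]; exact hplus ⟨hwγΦ, hpos⟩)
      constructor
      · exact ⟨y.symm γ, by rw [hΦvdef]; exact ⟨hβΦ, hβpos, hwγΦ, hwneg⟩, by simp⟩
      · rintro ⟨δ, hδ, rfl⟩
        rw [hΦHminusdef] at hδ
        exact hγH (by simpa using hδ.1)
    · rintro ⟨⟨β, hβ, rfl⟩, hnw⟩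
      obtain ⟨hyβΦ, hyβpos, hyβM⟩ := key β hβ
      rw [hΦvdef] at hβ
      obtain ⟨hβΦ, hβpos, hvβΦ, hvβneg⟩ := hβ
      refine ⟨hyβΦ, hyβpos, hyβM, ?_⟩
      intro hH
      apply hnw
      refine ⟨w.symm (y β), ?_, by simp⟩
      rw [hΦHminusdef, hwsymm]
      simp only [LinearEquiv.symm_apply_apply]
      exact ⟨by simpa [hwsymm] using hH, hvβΦ, hvβneg⟩
    -- done
  refine ⟨hset, ?_⟩
  rw [hset]
  have hAfin : (⇑y '' Φv).Finite := by
    apply Set.Finite.image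
    exact hfin.subset (by rw [hΦvdef]; exact fun x hx => hx.1)
  have h1 : (⇑y '' Φv) \ (⇑w '' ΦHminus)
      = (⇑y '' Φv) \ ((⇑y '' Φv) ∩ (⇑w '' ΦHminus)) := by
    ext x; simp only [Set.mem_diff, Set.mem_inter_iff]; tauto
  rw [h1, Set.ncard_diff Set.inter_subset_left (hAfin.subset Set.inter_subset_left),
    Nat.sub_sub_self (Set.ncard_le_ncard Set.inter_subset_left hAfin)]
end
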